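/- Let A be a unital algebra over ℂ, q ∈ (-1,1) a real scalar, s ∈ ℂ, and R, c, Q ∈ A satisfying: R·c = s·Q + c·R, Q·c = q·(c·Q), and R·Q = q·(Q·R). Then for all integers m, n ≥ 1 one has R^m · c^n = ∑_{k=0}^{min(m,n)} (n choose k)_q · ([m]_q!/[m-k]_q!) · s^k · (c^{n-k} · Q^k · R^{m-k}). -/

import Mathlib

/-- The `q`-number `[n]_q = ∑_{j=0}^{n-1} q^j`. -/
def qNum (q : ℝ) (n : ℕ) : ℝ := ∑ j ∈ Finset.range n, q ^ j

/-- The `q`-factorial `[n]_q! = ∏_{j=1}^n [j]_q`. -/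
def qFact (q : ℝ) (n : ℕ) : ℝ := ∏ j ∈ Finset.range n, qNum q (j + 1)

/-- The Gaussian binomial coefficient `(n choose k)_q = [n]_q!/([k]_q!·[n-k]_q!)`. -/
noncomputable def qBinom (q : ℝ) (n k : ℕ) : ℝ := qFact q n / (qFact q k * qFact q (n - k))

lemma qNum_zero (q : ℝ) : qNum q 0 = 0 := by simp [qNum]

lemma qNum_succ (q : ℝ) (n : ℕ) : qNum q (n + 1) = qNum q n + q ^ n :=
  Finset.sum_range_succ _ _

lemma qNum_pos {q : ℝ} (hq : q ∈ Set.Ioo (-1 : ℝ) 1) {n : ℕ} (hn : 1 ≤ n) :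
    0 < qNum q n := by
  obtain ⟨ha, hb⟩ := hq
  have habs : |q| < 1 := abs_lt.mpr ⟨ha, hb⟩
  have h1 : q ^ n < 1 := by
    calc q ^ n ≤ |q ^ n| := le_abs_self _
    _ = |q| ^ n := abs_pow q n
    _ < 1 := pow_lt_one₀ (abs_nonneg q) habs (by omega)
  rw [qNum, geom_sum_eq (ne_of_lt hb)]
  apply div_pos_of_neg_of_neg <;> linarith

lemma qFact_zero (q : ℝ) : qFact q 0 = 1 := by simp [qFact]

lemma qFact_succ (q : ℝ) (n : ℕ) : qFact q (n + 1) = qFact q n * qNum q (n + 1) :=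
  Finset.prod_range_succ _ _

lemma qFact_pos {q : ℝ} (hq : q ∈ Set.Ioo (-1 : ℝ) 1) (n : ℕ) : 0 < qFact q n :=
  Finset.prod_pos fun j _ => qNum_pos hq (Nat.succ_le_succ (Nat.zero_le j))

lemma qNum_add (q : ℝ) (a b : ℕ) : qNum q (a + b) = qNum q a + q ^ a * qNum q b := by
  induction b with
  | zero => simp [qNum_zero]
  | succ b ih =>
    rw [← Nat.add_assoc, qNum_succ, ih, qNum_succ, pow_add]
    ring


lemma Fc0 {q : ℝ} (hq : q ∈ Set.Ioo (-1 : ℝ) 1) (m n : ℕ) :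
    qBinom q n 0 * (qFact q m / qFact q (m - 0)) = 1 := by
  have h1 := (qFact_pos hq n).ne'
  have h2 := (qFact_pos hq m).ne'
  rw [qBinom, qFact_zero]
  field_simp
  rw [Nat.sub_zero, Nat.sub_zero, div_self (mul_ne_zero h1 h2)]

lemma rec1 {q : ℝ} (hq : q ∈ Set.Ioo (-1 : ℝ) 1) {m n k : ℕ}
    (hk1 : 1 ≤ k) (hkm : k ≤ m) (hkn : k ≤ n) :
    qBinom q n k * (qFact q (m + 1) / qFact q (m + 1 - k))
      = q ^ k * (qBinom q n k * (qFact q m / qFact q (m - k)))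
        + qNum q (n - (k - 1))
            * (qBinom q n (k - 1) * (qFact q m / qFact q (m - (k - 1)))) := by
  obtain ⟨j, rfl⟩ : ∃ j, k = j + 1 := ⟨k - 1, (Nat.succ_pred_eq_of_pos hk1).symm⟩
  obtain ⟨p, rfl⟩ : ∃ p, m = j + 1 + p := ⟨m - (j + 1), by omega⟩
  obtain ⟨r, rfl⟩ : ∃ r, n = j + 1 + r := ⟨n - (j + 1), by omega⟩
  have e1 : j + 1 + p + 1 - (j + 1) = p + 1 := by omega
  have e2 : j + 1 + p - (j + 1) = p := by omega
  have e3 : j + 1 + r - (j + 1) = r := by omega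
  have e4 : j + 1 - 1 = j := by omega
  have e5 : j + 1 + p - j = p + 1 := by omega
  have e6 : j + 1 + r - j = r + 1 := by omega
  have e7 : j + 1 + p + 1 = (j + 1) + (p + 1) := by omega
  rw [qBinom, qBinom, e1, e2, e3, e4, e5, e6]
  rw [show qFact q (j + 1 + p + 1) = qFact q (j + 1 + p) * qNum q (j + 1 + p + 1) from
    qFact_succ q _]
  rw [e7, qNum_add q (j + 1) (p + 1)]
  rw [qFact_succ q p, qFact_succ q j, qFact_succ q r]
  have hFj := (qFact_pos hq j).ne'
  have hFp := (qFact_pos hq p).ne'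
  have hFr := (qFact_pos hq r).ne'
  have hNj := (qNum_pos hq (Nat.le_add_left 1 j)).ne'
  have hNp := (qNum_pos hq (Nat.le_add_left 1 p)).ne'
  have hNr := (qNum_pos hq (Nat.le_add_left 1 r)).ne'
  field_simp
  ring

lemma rec2 {q : ℝ} (hq : q ∈ Set.Ioo (-1 : ℝ) 1) {m n : ℕ} (h : m + 1 ≤ n) :
    qBinom q n (m + 1) * (qFact q (m + 1) / qFact q (m + 1 - (m + 1)))
      = qNum q (n - m) * (qBinom q n m * (qFact q m / qFact q (m - m))) := by
  obtain ⟨r, rfl⟩ : ∃ r, n = m + 1 + r := ⟨n - (m + 1), by omega⟩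
  have e1 : m + 1 - (m + 1) = 0 := by omega
  have e2 : m - m = 0 := by omega
  have e3 : m + 1 + r - (m + 1) = r := by omega
  have e4 : m + 1 + r - m = r + 1 := by omega
  rw [qBinom, qBinom, e1, e2, e3, e4, qFact_zero]
  rw [qFact_succ q m, qFact_succ q r]
  have hFm := (qFact_pos hq m).ne'
  have hFr := (qFact_pos hq r).ne'
  have hNm := (qNum_pos hq (Nat.le_add_left 1 m)).ne'
  have hNr := (qNum_pos hq (Nat.le_add_left 1 r)).ne'
  field_simp

/-- Abstract form of Lemma 3.10 of the paper: if `R·c = s·Q + c·R`, `Q·c = q·(c·Q)` and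
`R·Q = q·(Q·R)`, then
`R^m c^n = ∑_{k=0}^{min(m,n)} (n choose k)_q ([m]_q!/[m-k]_q!) s^k c^{n-k} Q^k R^{m-k}`. -/
theorem stmt4 (A : Type*) [Ring A] [Algebra ℂ A]
    (q : ℝ) (hq : q ∈ Set.Ioo (-1 : ℝ) 1) (s : ℂ) (R c Q : A)
    (h1 : R * c = s • Q + c * R)
    (h2 : Q * c = (q : ℂ) • (c * Q))
    (h3 : R * Q = (q : ℂ) • (Q * R)) :
    ∀ m n : ℕ, 1 ≤ m → 1 ≤ n →
      R ^ m * c ^ n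
        = ∑ k ∈ Finset.range (min m n + 1),
            (((qBinom q n k * (qFact q m / qFact q (m - k)) : ℝ) : ℂ) * s ^ k) •
              (c ^ (n - k) * Q ^ k * R ^ (m - k)) := by
  -- commutation lemmas
  have hQc : ∀ j : ℕ, Q * c ^ j = ((q : ℂ) ^ j) • (c ^ j * Q) := by
    intro j
    induction j with
    | zero => simp
    | succ j ih =>
      calc Q * c ^ (j + 1) = (Q * c) * c ^ j := by rw [pow_succ', ← mul_assoc]
      _ = (q : ℂ) • (c * (Q * c ^ j)) := by rw [h2, smul_mul_assoc, mul_assoc]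
      _ = (q : ℂ) • (c * ((q : ℂ) ^ j • (c ^ j * Q))) := by rw [ih]
      _ = ((q : ℂ) ^ (j + 1)) • (c ^ (j + 1) * Q) := by
          rw [mul_smul_comm, smul_smul, ← mul_assoc, ← pow_succ', ← pow_succ']
  have hRQ : ∀ j : ℕ, R * Q ^ j = ((q : ℂ) ^ j) • (Q ^ j * R) := by
    intro j
    induction j with
    | zero => simp
    | succ j ih =>
      calc R * Q ^ (j + 1) = (R * Q) * Q ^ j := by rw [pow_succ', ← mul_assoc]
      _ = (q : ℂ) • (Q * (R * Q ^ j)) := by rw [h3, smul_mul_assoc, mul_assoc]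
      _ = (q : ℂ) • (Q * ((q : ℂ) ^ j • (Q ^ j * R))) := by rw [ih]
      _ = ((q : ℂ) ^ (j + 1)) • (Q ^ (j + 1) * R) := by
          rw [mul_smul_comm, smul_smul, ← mul_assoc, ← pow_succ', ← pow_succ']
  have hRc : ∀ j : ℕ, R * c ^ j
      = ((qNum q j : ℂ) * s) • (c ^ (j - 1) * Q) + c ^ j * R := by
    intro j
    induction j with
    | zero => simp [qNum_zero]
    | succ j ih =>
      match j, ih with
      | 0, _ => simpa [qNum, h1] using h1
      | j + 1, ih =>
        simp only [Nat.add_sub_cancel] at ih ⊢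
        calc R * c ^ (j + 2) = (R * c) * c ^ (j + 1) := by rw [pow_succ', ← mul_assoc]
        _ = s • (Q * c ^ (j + 1)) + c * (R * c ^ (j + 1)) := by
            rw [h1, add_mul, smul_mul_assoc, mul_assoc]
        _ = s • ((q : ℂ) ^ (j + 1) • (c ^ (j + 1) * Q))
              + c * (((qNum q (j + 1) : ℂ) * s) • (c ^ j * Q) + c ^ (j + 1) * R) := by
            rw [hQc, ih]
        _ = ((qNum q (j + 2) : ℂ) * s) • (c ^ (j + 1) * Q) + c ^ (j + 2) * R := by
            rw [mul_add, mul_smul_comm, smul_smul,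
              ← mul_assoc c (c ^ j), ← pow_succ', ← mul_assoc c (c ^ (j + 1)), ← pow_succ',
              ← add_assoc, ← add_smul]
            congr 1
            push_cast [qNum_succ]
            ring
  have hRQb : ∀ j b : ℕ, R * (Q ^ j * R ^ b) = ((q : ℂ) ^ j) • (Q ^ j * R ^ (b + 1)) := by
    intro j b
    rw [← mul_assoc, hRQ, smul_mul_assoc, mul_assoc, ← pow_succ']
  have hstep : ∀ a b j : ℕ, R * (c ^ a * Q ^ j * R ^ b)
      = ((qNum q a : ℂ) * s) • (c ^ (a - 1) * Q ^ (j + 1) * R ^ b)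
        + ((q : ℂ) ^ j) • (c ^ a * Q ^ j * R ^ (b + 1)) := by
    intro a b j
    calc R * (c ^ a * Q ^ j * R ^ b) = (R * c ^ a) * (Q ^ j * R ^ b) := by
          rw [mul_assoc (c ^ a), ← mul_assoc]
    _ = (((qNum q a : ℂ) * s) • (c ^ (a - 1) * Q) + c ^ a * R) * (Q ^ j * R ^ b) := by
          rw [hRc]
    _ = ((qNum q a : ℂ) * s) • ((c ^ (a - 1) * Q) * (Q ^ j * R ^ b))
          + c ^ a * (R * (Q ^ j * R ^ b)) := by
          rw [add_mul, smul_mul_assoc, mul_assoc (c ^ a) R]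
    _ = ((qNum q a : ℂ) * s) • (c ^ (a - 1) * Q ^ (j + 1) * R ^ b)
          + ((q : ℂ) ^ j) • (c ^ a * Q ^ j * R ^ (b + 1)) := by
          rw [hRQb, mul_smul_comm, mul_assoc (c ^ (a - 1)) Q, ← mul_assoc Q (Q ^ j),
            ← pow_succ', ← mul_assoc (c ^ (a - 1)), ← mul_assoc (c ^ a) (Q ^ j)]
  intro m n hm hn
  clear hm hn
  induction m with
  | zero =>
    rw [Nat.min_comm, Nat.min_zero, Finset.sum_range_one]
    have hc : ((qBinom q n 0 * (qFact q 0 / qFact q (0 - 0)) : ℝ) : ℂ) * s ^ 0 = 1 := by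
      rw [Fc0 hq]; simp
    rw [hc, one_smul]
    simp
  | succ m ih =>
    have key : R ^ (m + 1) * c ^ n
        = ∑ k ∈ Finset.range (min m n + 1),
            ((((qBinom q n k * (qFact q m / qFact q (m - k)) : ℝ) : ℂ) * s ^ k)
                * ((qNum q (n - k) : ℂ) * s))
              • (c ^ (n - (k + 1)) * Q ^ (k + 1) * R ^ (m + 1 - (k + 1)))
          + ∑ k ∈ Finset.range (min m n + 1),
            ((((qBinom q n k * (qFact q m / qFact q (m - k)) : ℝ) : ℂ) * s ^ k)
                * (q : ℂ) ^ k)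
              • (c ^ (n - k) * Q ^ k * R ^ (m + 1 - k)) := by
      rw [pow_succ', mul_assoc, ih, Finset.mul_sum, ← Finset.sum_add_distrib]
      refine Finset.sum_congr rfl fun k hk => ?_
      have hkm : k ≤ m := by
        have := Finset.mem_range.mp hk; omega
      have e1 : n - (k + 1) = n - k - 1 := by omega
      have e2 : m + 1 - (k + 1) = m - k := by omega
      have e3 : m + 1 - k = m - k + 1 := by omega
      rw [e1, e2, e3, mul_smul_comm, hstep (n - k) (m - k) k, smul_add, smul_smul, smul_smul]
    -- coefficient identities
    have hco1 : ∀ k : ℕ, k + 1 ≤ m → k + 1 ≤ n →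
        ((((qBinom q n k * (qFact q m / qFact q (m - k)) : ℝ) : ℂ) * s ^ k)
            * ((qNum q (n - k) : ℂ) * s))
          + ((((qBinom q n (k + 1) * (qFact q m / qFact q (m - (k + 1))) : ℝ) : ℂ)
              * s ^ (k + 1)) * (q : ℂ) ^ (k + 1))
        = (((qBinom q n (k + 1) * (qFact q (m + 1) / qFact q (m + 1 - (k + 1))) : ℝ) : ℂ)
            * s ^ (k + 1)) := by
      intro k hkm hkn
      have h := rec1 (q := q) hq (Nat.le_add_left 1 k) hkm hkn
      simp only [Nat.add_sub_cancel] at h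
      rw [h]; push_cast; ring
    have hco0 :
        ((((qBinom q n 0 * (qFact q m / qFact q (m - 0)) : ℝ) : ℂ) * s ^ 0) * (q : ℂ) ^ 0)
        = (((qBinom q n 0 * (qFact q (m + 1) / qFact q (m + 1 - 0)) : ℝ) : ℂ) * s ^ 0) := by
      rw [Fc0 hq, Fc0 hq]; norm_num
    rw [key]
    rcases le_or_gt n m with hnm | hmn
    · have hM : min m n = n := min_eq_right hnm
      have hM' : min (m + 1) n = n := min_eq_right (by omega)
      rw [hM, hM']
      rw [Finset.sum_range_succ]
      rw [Nat.sub_self, qNum_zero]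
      simp only [Complex.ofReal_zero, zero_mul, mul_zero, zero_smul, add_zero]
      rw [Finset.sum_range_succ']
      rw [Finset.sum_range_succ' (fun k =>
        ((((qBinom q n k * (qFact q (m + 1) / qFact q (m + 1 - k)) : ℝ) : ℂ) * s ^ k) •
          (c ^ (n - k) * Q ^ k * R ^ (m + 1 - k))))]
      rw [← add_assoc, ← Finset.sum_add_distrib]
      congr 1
      · refine Finset.sum_congr rfl fun k hk => ?_
        have hk' := Finset.mem_range.mp hk
        rw [← add_smul, hco1 k (by omega) (by omega)]
      · rw [← hco0]
    · have hM : min m n = m := min_eq_left (by omega)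
      have hM' : min (m + 1) n = m + 1 := min_eq_left (by omega)
      rw [hM, hM']
      rw [Finset.sum_range_succ]
      rw [Finset.sum_range_succ']
      rw [Finset.sum_range_succ' (fun k =>
        ((((qBinom q n k * (qFact q (m + 1) / qFact q (m + 1 - k)) : ℝ) : ℂ) * s ^ k) •
          (c ^ (n - k) * Q ^ k * R ^ (m + 1 - k))))]
      rw [Finset.sum_range_succ (fun k =>
        ((((qBinom q n (k + 1) * (qFact q (m + 1) / qFact q (m + 1 - (k + 1))) : ℝ) : ℂ)
            * s ^ (k + 1)) •
          (c ^ (n - (k + 1)) * Q ^ (k + 1) * R ^ (m + 1 - (k + 1)))))]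
      have hcoTop :
          ((((qBinom q n m * (qFact q m / qFact q (m - m)) : ℝ) : ℂ) * s ^ m)
              * ((qNum q (n - m) : ℂ) * s))
          = (((qBinom q n (m + 1) * (qFact q (m + 1) / qFact q (m + 1 - (m + 1))) : ℝ) : ℂ)
              * s ^ (m + 1)) := by
        rw [rec2 hq (by omega : m + 1 ≤ n)]; push_cast; ring
      rw [add_add_add_comm, ← Finset.sum_add_distrib]
      conv_rhs => rw [add_assoc]
      congr 1
      · refine Finset.sum_congr rfl fun k hk => ?_
        have hk' := Finset.mem_range.mp hk
        rw [← add_smul, hco1 k (by omega) (by omega)]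
      · congr 1
        · rw [hcoTop]
        · rw [← hco0]
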